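/- Let α = 1/2^{23}. Let G be a graph on n vertices with minimum degree at least n/2, and let A be a set of vertices with n/2 ≤ |A| ≤ (1/2 + 16α)·n such that the bipartite graph induced by the edges between A and Ā has at least (1/4 − 14α)·n² edges and minimum degree at least n/64, and moreover either |A| = ⌈n/2⌉ or the induced subgraph G[A] has maximum degree at most n/32. Then for every fixed positive real β there exists a constant C = C(β) such that for every p ≥ C·log n / n, the random subgraph G_p asymptotically almost surely complements every its subgraph that has property BIPRE(1/6) (with respect to the partition V₁ = A, V₂ = Ā) and has at most β·n·log n edges. -/

import Mathlib

open SimpleGraph Finset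
open scoped Classical

universe u

noncomputable section

/-- `1/2^23`, the value of `α` fixed in the random-subgraph section of the paper. -/
def paperAlpha : ℝ := 1 / 2 ^ 23

/-- The graph on `V` consisting of the edges of the walk `P`. -/
def walkGraph {V : Type u} {G : SimpleGraph V} {a b : V} (P : G.Walk a b) : SimpleGraph V :=
  SimpleGraph.fromEdgeSet {e | e ∈ P.edges}

/-- There is a path of length `ℓ` from `v` to `w` in `H` containing the edge `e`. -/
def SameLenPath {V : Type u} (H : SimpleGraph V) (ℓ : ℕ) (e : Sym2 V) (v w : V) : Prop :=
  ∃ Q : H.Walk v w, Q.IsPath ∧ Q.length = ℓ ∧ e ∈ Q.edges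

/-- There is a path in `H` longer than `ℓ` containing the edge `e`. -/
def LongerPath {V : Type u} (H : SimpleGraph V) (ℓ : ℕ) (e : Sym2 V) : Prop :=
  ∃ (x y : V) (Q : H.Walk x y), Q.IsPath ∧ ℓ < Q.length ∧ e ∈ Q.edges

/-- `S` and `T` witness the rotation property of `G` for the path `P` with fixed edge `e`:
`S` has at least `ξ n` vertices, and for every `v ∈ S` the set `T v` has at least `ξ n`
vertices and for every `w ∈ T v` there is a path of the same length as `P` in `G ∪ P`
containing `e` with endpoints `v` and `w`. -/
def REwitness {V : Type u} [Fintype V] (ξ : ℝ) (G : SimpleGraph V) {a b : V}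
    (P : (⊤ : SimpleGraph V).Walk a b) (e : Sym2 V) (S : Finset V) (T : V → Finset V) :
    Prop :=
  ξ * (Fintype.card V : ℝ) ≤ (S.card : ℝ) ∧
    ∀ v ∈ S, ξ * (Fintype.card V : ℝ) ≤ ((T v).card : ℝ) ∧
      ∀ w ∈ T v, SameLenPath (G ⊔ walkGraph P) P.length e v w

/-- Property `RE(ξ)`. -/
def PropRE {V : Type u} [Fintype V] (ξ : ℝ) (G : SimpleGraph V) : Prop :=
  G.Connected ∧
    ∀ (a b : V) (P : (⊤ : SimpleGraph V).Walk a b), P.IsPath → ∀ e ∈ P.edges,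
      LongerPath (G ⊔ walkGraph P) P.length e ∨ ∃ S T, REwitness ξ G P e S T

/-- `G₂` complements `G₁` (a graph with property `RE(ξ)`). -/
def ComplementsRE {V : Type u} [Fintype V] (ξ : ℝ) (G₁ G₂ : SimpleGraph V) : Prop :=
  ∀ (a b : V) (P : (⊤ : SimpleGraph V).Walk a b), P.IsPath → ∀ e ∈ P.edges,
    LongerPath (G₁ ⊔ walkGraph P) P.length e ∨
      ∃ S T, REwitness ξ G₁ P e S T ∧
        ∃ v ∈ S, ∃ w ∈ T v, (G₁ ⊔ G₂ ⊔ walkGraph P).Adj v w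

/-- The set `N(X)` of vertices having a neighbour in `X`. -/
def nbrSet {V : Type u} [Fintype V] (G : SimpleGraph V) (X : Finset V) : Finset V :=
  Finset.univ.filter fun v => ∃ x ∈ X, G.Adj x v

/-- `e(A,B)`: the number of pairs `(a,b) ∈ A × B` with `{a,b}` an edge of `G`. -/
def eBetween {V : Type u} (G : SimpleGraph V) (A B : Finset V) : ℕ :=
  ((A ×ˢ B).filter fun p => G.Adj p.1 p.2).card

/-- `e(A)`: the number of edges of `G` with both endpoints in `A`. -/
def eIn {V : Type u} [Fintype V] (G : SimpleGraph V) (A : Finset V) : ℕ :=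
  (G.edgeFinset.filter fun e => ∀ v ∈ e, v ∈ A).card

/-- A half-set: a set of `⌊n/2⌋` or `⌈n/2⌉` vertices. -/
def IsHalfSet (n : ℕ) (A : Finset (Fin n)) : Prop :=
  A.card = n / 2 ∨ A.card = (n + 1) / 2

/-- A graph is Hamilton connected if every pair of distinct vertices is joined by a
Hamilton path. -/
def HamiltonConnected {V : Type u} (G : SimpleGraph V) : Prop :=
  ∀ x y : V, x ≠ y → ∃ p : G.Walk x y, p.IsHamiltonian

/-- The probability that the random subgraph of `G`, obtained by retaining every edge of `G`
independently with probability `p`, satisfies the predicate `Q`. -/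
def subgraphProb {V : Type u} [Fintype V] (G : SimpleGraph V) (p : ℝ)
    (Q : SimpleGraph V → Prop) : ℝ :=
  ∑ S ∈ G.edgeFinset.powerset,
    if Q (SimpleGraph.fromEdgeSet (↑S : Set (Sym2 V))) then
      p ^ S.card * (1 - p) ^ (G.edgeFinset.card - S.card)
    else 0

/-- `MakerWins board win b M B` : in the Maker-Breaker game on `board` with winning-set
predicate `win` (on Maker's claimed set) and Breaker bias `b`, with Maker to move, Maker
having claimed `M` and Breaker having claimed `B`, Maker has a winning strategy. -/
inductive MakerWins {X : Type u} (board : Finset X) (win : Finset X → Prop) (b : ℕ) :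
    Finset X → Finset X → Prop where
  | win_now : ∀ M B : Finset X, win M → MakerWins board win b M B
  | move : ∀ (M B : Finset X) (x : X), x ∈ board → x ∉ M → x ∉ B →
      (∀ B' : Finset X, B' ⊆ board \ (insert x M ∪ B) → B'.card ≤ b →
        MakerWins board win b (insert x M) (B ∪ B')) →
      MakerWins board win b M B

/-- A half-expander with parameters `ε` and `r`. -/
def IsHalfExpander {V : Type u} [Fintype V] (G : SimpleGraph V) (ε r : ℝ) : Prop :=
  (∀ X : Finset V, (X.card : ℝ) ≤ ε * (Fintype.card V : ℝ) / r →
      r * (X.card : ℝ) ≤ ((nbrSet G X).card : ℝ)) ∧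
  (∀ X : Finset V, (Fintype.card V : ℝ) / (ε * r) ≤ (X.card : ℝ) →
      (1 / 2 - ε) * (Fintype.card V : ℝ) ≤ ((nbrSet G X).card : ℝ)) ∧
  (∀ X Y : Finset V, Disjoint X Y →
      (1 / 2 - ε ^ ((1 : ℝ) / 5)) * (Fintype.card V : ℝ) ≤ (X.card : ℝ) →
      (1 / 2 - ε ^ ((1 : ℝ) / 5)) * (Fintype.card V : ℝ) ≤ (Y.card : ℝ) →
      2 * (Fintype.card V : ℝ) < (eBetween G X Y : ℝ))

/-- An expander with parameters `ε` and `r`. -/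
def IsExpander {V : Type u} [Fintype V] (G : SimpleGraph V) (ε r : ℝ) : Prop :=
  (∀ X : Finset V, (X.card : ℝ) ≤ (Fintype.card V : ℝ) / r ^ ((3 : ℝ) / 2) →
      r * (X.card : ℝ) ≤ ((nbrSet G X).card : ℝ)) ∧
  (∀ X : Finset V, (Fintype.card V : ℝ) / r ^ ((3 : ℝ) / 4) ≤ (X.card : ℝ) →
      (1 - ε) * (Fintype.card V : ℝ) ≤ ((nbrSet G X).card : ℝ))

/-- A special frame `(V₁, V₂, S_V, S_E)` of `G` (with `|V₁| = |V₂| + k`). -/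
structure IsSpecialFrame {V : Type u} [Fintype V] (G : SimpleGraph V) (k : ℕ)
    (V₁ V₂ SV : Finset V) (SE : Finset (Sym2 V)) : Prop where
  union_eq : V₁ ∪ V₂ = Finset.univ
  disj : Disjoint V₁ V₂
  card_eq : V₁.card = V₂.card + k
  SV_sub : SV ⊆ V₁
  SV_card : SV.card = k
  SE_card : SE.card = k
  SE_isEdge : ∀ e ∈ SE, e ∈ G.edgeSet
  SE_sub : ∀ e ∈ SE, ∀ v ∈ e, v ∈ V₁
  SE_disj : ∀ e ∈ SE, ∀ e' ∈ SE, e ≠ e' → ∀ v ∈ e, v ∉ e'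
  SV_unique : ∀ v ∈ SV, ∃! e, e ∈ SE ∧ v ∈ e

/-- A matched special frame `(V₁, V₂, S_V, S_E, f)` of `G`:  a special frame together with
a perfect matching `f` (in `G`) between the vertices of `V₁' = V₁ \ S_V` and `V₂`. -/
structure IsMatchedFrame {V : Type u} [Fintype V] (G : SimpleGraph V) (k : ℕ)
    (V₁ V₂ SV : Finset V) (SE : Finset (Sym2 V)) (f : V → V)
    extends IsSpecialFrame G k V₁ V₂ SV SE : Prop where
  f_mem : ∀ v ∈ V₁ \ SV, f v ∈ V₂ ∧ G.Adj v (f v) ∧ f (f v) = v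
  f_mem' : ∀ w ∈ V₂, f w ∈ V₁ \ SV ∧ f (f w) = w

/-- The framed subgraph: the subgraph of `G` induced by the edges between `V₁` and `V₂`. -/
def framedSubgraph {V : Type u} (G : SimpleGraph V) (V₁ V₂ : Finset V) : SimpleGraph V where
  Adj v w := G.Adj v w ∧ ((v ∈ V₁ ∧ w ∈ V₂) ∨ (v ∈ V₂ ∧ w ∈ V₁))
  symm := by
    constructor
    intro v w h
    refine ⟨h.1.symm, ?_⟩
    tauto
  loopless := ⟨fun v h => G.loopless.irrefl v h.1⟩

/-- A proper walk with respect to the matched special frame `(V₁, V₂, SV, SE, f)`: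
a path all of whose edges intersect both `V₁` and `V₂` or are special edges, which
contains the special edge of each of its special vertices, and which satisfies
`V₁' ∩ V(P) = f(V₂ ∩ V(P))`. -/
def ProperWalk {V : Type u} (V₁ V₂ SV : Finset V) (SE : Finset (Sym2 V)) (f : V → V)
    {G' : SimpleGraph V} {a b : V} (P : G'.Walk a b) : Prop :=
  P.IsPath ∧
  (V₁ \ SV).filter (· ∈ P.support) = (V₂.filter (· ∈ P.support)).image f ∧
  (∀ v ∈ SV, v ∈ P.support → ∃ e ∈ SE, v ∈ e ∧ e ∈ P.edges) ∧
  (∀ e ∈ P.edges, e ∈ SE ∨ ((∃ v ∈ V₁, v ∈ e) ∧ (∃ v ∈ V₂, v ∈ e)))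

/-- There is a proper path in `H` longer than `ℓ`. -/
def BipLonger {V : Type u} (H : SimpleGraph V) (V₁ V₂ SV : Finset V) (SE : Finset (Sym2 V))
    (f : V → V) (ℓ : ℕ) : Prop :=
  ∃ (x y : V) (Q : H.Walk x y), ProperWalk V₁ V₂ SV SE f Q ∧ ℓ < Q.length

/-- `S ⊆ V₂` and `T` witness the bipartite rotation property of `G` for the proper path
`P`. -/
def BipREwitness {V : Type u} [Fintype V] (ξ : ℝ) (G : SimpleGraph V)
    (V₁ V₂ SV : Finset V) (SE : Finset (Sym2 V)) (f : V → V) {a b : V}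
    (P : (⊤ : SimpleGraph V).Walk a b) (S : Finset V) (T : V → Finset V) : Prop :=
  S ⊆ V₂ ∧ ξ * (Fintype.card V : ℝ) ≤ (S.card : ℝ) ∧
    ∀ v ∈ S, T v ⊆ V₁ ∧ ξ * (Fintype.card V : ℝ) ≤ ((T v).card : ℝ) ∧
      ∀ w ∈ T v, ∃ Q : (G ⊔ walkGraph P).Walk v w,
        ProperWalk V₁ V₂ SV SE f Q ∧ Q.length = P.length

/-- Property `BIPRE(ξ)` with respect to the partition `(V₁, V₂)`. -/
def BIPREwrt {V : Type u} [Fintype V] (ξ : ℝ) (G : SimpleGraph V) (V₁ V₂ : Finset V) :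
    Prop :=
  ∃ (k : ℕ) (SV : Finset V) (SE : Finset (Sym2 V)) (f : V → V),
    IsMatchedFrame G k V₁ V₂ SV SE f ∧ (framedSubgraph G V₁ V₂).Connected ∧
      ∀ (a b : V) (P : (⊤ : SimpleGraph V).Walk a b), ProperWalk V₁ V₂ SV SE f P →
        BipLonger (G ⊔ walkGraph P) V₁ V₂ SV SE f P.length ∨
          ∃ S T, BipREwitness ξ G V₁ V₂ SV SE f P S T

/-- Property `BIPRE(ξ)`. -/
def BIPRE {V : Type u} [Fintype V] (ξ : ℝ) (G : SimpleGraph V) : Prop :=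
  ∃ V₁ V₂ : Finset V, BIPREwrt ξ G V₁ V₂

/-- `G₂` complements `G₁` (a graph with property `BIPRE(ξ)` w.r.t. `(V₁, V₂)`). -/
def BipComplementsWrt {V : Type u} [Fintype V] (ξ : ℝ) (G₁ G₂ : SimpleGraph V)
    (V₁ V₂ : Finset V) : Prop :=
  ∃ (k : ℕ) (SV : Finset V) (SE : Finset (Sym2 V)) (f : V → V),
    IsMatchedFrame G₁ k V₁ V₂ SV SE f ∧ (framedSubgraph G₁ V₁ V₂).Connected ∧
      ∀ (a b : V) (P : (⊤ : SimpleGraph V).Walk a b), ProperWalk V₁ V₂ SV SE f P →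
        BipLonger (G₁ ⊔ walkGraph P) V₁ V₂ SV SE f P.length ∨
          ∃ S T, BipREwitness ξ G₁ V₁ V₂ SV SE f P S T ∧
            ∃ v ∈ S, ∃ w ∈ T v, (G₁ ⊔ G₂ ⊔ walkGraph P).Adj v w

/-- The expansion conditions of a `k`-bipartite-expander with parameters `ε` and `r`,
with respect to the frame data `(V₁, V₂, SE)` (here `V₁'' = V₁ ∖ V(S_E)`). -/
def IsBipExpander {V : Type u} [Fintype V] (G : SimpleGraph V) (V₁ V₂ : Finset V)
    (SE : Finset (Sym2 V)) (ε r : ℝ) : Prop :=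
  (∀ X ⊆ V₁,
    ((X.card : ℝ) ≤ (Fintype.card V : ℝ) / r ^ ((3 : ℝ) / 2) →
      r * (X.card : ℝ) ≤ ((nbrSet G X ∩ V₂).card : ℝ)) ∧
    ((Fintype.card V : ℝ) / r ^ ((3 : ℝ) / 4) ≤ (X.card : ℝ) →
      (1 - ε) * (V₂.card : ℝ) ≤ ((nbrSet G X ∩ V₂).card : ℝ))) ∧
  (∀ Y ⊆ V₂,
    ((Y.card : ℝ) ≤ (Fintype.card V : ℝ) / r ^ ((3 : ℝ) / 2) →
      r * (Y.card : ℝ) ≤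
        ((nbrSet G Y ∩ V₁.filter fun v => ∀ e ∈ SE, v ∉ e).card : ℝ)) ∧
    ((Fintype.card V : ℝ) / r ^ ((3 : ℝ) / 4) ≤ (Y.card : ℝ) →
      (1 - ε) * ((V₁.filter fun v => ∀ e ∈ SE, v ∉ e).card : ℝ) ≤
        ((nbrSet G Y ∩ V₁.filter fun v => ∀ e ∈ SE, v ∉ e).card : ℝ)))

end

section Helpers

variable {V : Type u} [Fintype V] [DecidableEq V]

lemma bsum {γ : Type*} (E : Finset γ) (p q : ℝ) :
    ∑ S ∈ E.powerset, p ^ S.card * q ^ (E.card - S.card) = (p + q) ^ E.card := by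
  have h := Finset.prod_add (fun _ : γ => p) (fun _ : γ => q) E
  simp only [Finset.prod_const] at h
  calc ∑ S ∈ E.powerset, p ^ S.card * q ^ (E.card - S.card)
      = ∑ S ∈ E.powerset, p ^ S.card * q ^ (E \ S).card := by
        apply Finset.sum_congr rfl
        intro t ht
        rw [Finset.card_sdiff_of_subset (Finset.mem_powerset.mp ht)]
    _ = (p + q) ^ E.card := h.symm

lemma weight_nonneg {γ : Type*} (p : ℝ) (h0 : 0 ≤ p) (h1 : p ≤ 1) (m : ℕ) (S : Finset γ) :
    0 ≤ p ^ S.card * (1 - p) ^ (m - S.card) :=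
  mul_nonneg (pow_nonneg h0 _) (pow_nonneg (by linarith) _)

lemma prob_le (G : SimpleGraph V) (p : ℝ) (h0 : 0 ≤ p) (h1 : p ≤ 1)
    (s F : Finset (Sym2 V)) (hF : F ⊆ G.edgeFinset) (R : SimpleGraph V → Prop)
    (hR : ∀ Sed ∈ G.edgeFinset.powerset, R (SimpleGraph.fromEdgeSet (↑Sed : Set (Sym2 V))) →
      s ⊆ Sed ∧ Sed ∩ F = ∅) :
    subgraphProb G p R ≤ p ^ s.card * (1 - p) ^ F.card := by
  classical
  set E := G.edgeFinset with hE
  have hstep : subgraphProb G p R ≤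
      ∑ Sed ∈ E.powerset.filter (fun Sed => s ⊆ Sed ∧ Sed ∩ F = ∅),
        p ^ Sed.card * (1 - p) ^ (E.card - Sed.card) := by
    rw [subgraphProb, ← Finset.sum_filter_add_sum_filter_not E.powerset
      (fun Sed => s ⊆ Sed ∧ Sed ∩ F = ∅)]
    have h2 : ∑ Sed ∈ E.powerset.filter (fun Sed => ¬(s ⊆ Sed ∧ Sed ∩ F = ∅)),
        (if R (SimpleGraph.fromEdgeSet (↑Sed : Set (Sym2 V))) then
          p ^ Sed.card * (1 - p) ^ (E.card - Sed.card) else 0) = 0 := by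
      apply Finset.sum_eq_zero
      intro Sed hSed
      rw [Finset.mem_filter] at hSed
      rw [if_neg]
      intro hRS
      exact hSed.2 (hR Sed hSed.1 hRS)
    have h1' : ∑ Sed ∈ E.powerset.filter (fun Sed => s ⊆ Sed ∧ Sed ∩ F = ∅),
        (if R (SimpleGraph.fromEdgeSet (↑Sed : Set (Sym2 V))) then
          p ^ Sed.card * (1 - p) ^ (E.card - Sed.card) else 0) ≤
        ∑ Sed ∈ E.powerset.filter (fun Sed => s ⊆ Sed ∧ Sed ∩ F = ∅),
          p ^ Sed.card * (1 - p) ^ (E.card - Sed.card) := by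
      apply Finset.sum_le_sum
      intro Sed _
      split
      · exact le_rfl
      · exact weight_nonneg p h0 h1 _ _
    rw [h2, add_zero]
    exact h1'
  refine hstep.trans ?_
  by_cases hd : s ⊆ E ∧ Disjoint s F
  · obtain ⟨hsE, hdisj⟩ := hd
    set E' := E \ (s ∪ F) with hE'
    have hbij : ∑ Sed ∈ E.powerset.filter (fun Sed => s ⊆ Sed ∧ Sed ∩ F = ∅),
        p ^ Sed.card * (1 - p) ^ (E.card - Sed.card) =
        ∑ S' ∈ E'.powerset, p ^ (S'.card + s.card) * (1 - p) ^ (E.card - (S'.card + s.card)) := by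
      apply Finset.sum_nbij' (fun Sed => Sed \ s) (fun S' => S' ∪ s)
      · intro Sed hSed
        rw [Finset.mem_filter, Finset.mem_powerset] at hSed
        rw [Finset.mem_powerset]
        intro x hx
        rw [Finset.mem_sdiff] at hx
        rw [hE', Finset.mem_sdiff, Finset.mem_union]
        refine ⟨hSed.1 hx.1, ?_⟩
        rintro (h | h)
        · exact hx.2 h
        · have : x ∈ Sed ∩ F := Finset.mem_inter.mpr ⟨hx.1, h⟩
          rw [hSed.2.2] at this
          exact absurd this (Finset.notMem_empty x)
      · intro S' hS'
        rw [Finset.mem_powerset] at hS'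
        rw [Finset.mem_filter, Finset.mem_powerset]
        have hS'sub : ∀ x ∈ S', x ∈ E ∧ x ∉ s ∧ x ∉ F := by
          intro x hx
          have := hS' hx
          rw [hE', Finset.mem_sdiff, Finset.mem_union] at this
          push_neg at this
          exact ⟨this.1, this.2.1, this.2.2⟩
        refine ⟨?_, Finset.subset_union_right, ?_⟩
        · intro x hx
          rw [Finset.mem_union] at hx
          rcases hx with h | h
          · exact (hS'sub x h).1
          · exact hsE h
        · rw [Finset.eq_empty_iff_forall_notMem]
          intro x hx
          rw [Finset.mem_inter, Finset.mem_union] at hx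
          rcases hx.1 with h | h
          · exact (hS'sub x h).2.2 hx.2
          · exact (Finset.disjoint_left.mp hdisj) h hx.2
      · intro Sed hSed
        rw [Finset.mem_filter] at hSed
        rw [Finset.sdiff_union_of_subset hSed.2.1]
      · intro S' hS'
        rw [Finset.mem_powerset] at hS'
        apply Finset.union_sdiff_cancel_right
        rw [Finset.disjoint_left]
        intro x hx
        have := hS' hx
        rw [hE', Finset.mem_sdiff, Finset.mem_union] at this
        exact fun hc => this.2 (Or.inl hc)
      · intro Sed hSed
        rw [Finset.mem_filter] at hSed
        have : (Sed \ s).card = Sed.card - s.card := Finset.card_sdiff_of_subset hSed.2.1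
        have hle : s.card ≤ Sed.card := Finset.card_le_card hSed.2.1
        rw [this]
        congr 2 <;> omega
    rw [hbij]
    have hcard : E.card = E'.card + s.card + F.card := by
      have hsub : s ∪ F ⊆ E := Finset.union_subset hsE hF
      have h1 : E'.card = E.card - (s ∪ F).card := Finset.card_sdiff_of_subset hsub
      have h2 : (s ∪ F).card = s.card + F.card := Finset.card_union_of_disjoint hdisj
      have h3 : (s ∪ F).card ≤ E.card := Finset.card_le_card hsub
      omega
    have hterm : ∀ S' ∈ E'.powerset,
        p ^ (S'.card + s.card) * (1 - p) ^ (E.card - (S'.card + s.card)) =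
        p ^ s.card * (1 - p) ^ F.card * (p ^ S'.card * (1 - p) ^ (E'.card - S'.card)) := by
      intro S' hS'
      have hle : S'.card ≤ E'.card := Finset.card_le_card (Finset.mem_powerset.mp hS')
      have hexp : E.card - (S'.card + s.card) = (E'.card - S'.card) + F.card := by omega
      rw [hexp, pow_add, pow_add]
      ring
    rw [Finset.sum_congr rfl hterm, ← Finset.mul_sum, bsum]
    have : p + (1 - p) = 1 := by ring
    rw [this, one_pow, mul_one]
  · -- filter is empty
    have : E.powerset.filter (fun Sed => s ⊆ Sed ∧ Sed ∩ F = ∅) = ∅ := by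
      rw [Finset.eq_empty_iff_forall_notMem]
      intro Sed hSed
      rw [Finset.mem_filter, Finset.mem_powerset] at hSed
      apply hd
      refine ⟨hSed.2.1.trans hSed.1, Finset.disjoint_left.mpr ?_⟩
      intro x hxs hxF
      have : x ∈ Sed ∩ F := Finset.mem_inter.mpr ⟨hSed.2.1 hxs, hxF⟩
      rw [hSed.2.2] at this
      exact absurd this (Finset.notMem_empty x)
    rw [this, Finset.sum_empty]
    exact mul_nonneg (pow_nonneg h0 _) (pow_nonneg (by linarith) _)

lemma eBetween_eq_sum (G : SimpleGraph V) (X Y : Finset V) :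
    eBetween G X Y = ∑ x ∈ X, (Y.filter (G.Adj x)).card := by
  classical
  rw [eBetween]
  rw [Finset.card_eq_sum_card_fiberwise (f := Prod.fst) (t := X) (by
    intro p hp
    rw [Finset.mem_coe, Finset.mem_filter, Finset.mem_product] at hp
    exact hp.1.1)]
  apply Finset.sum_congr rfl
  intro x hx
  apply Finset.card_bij (fun p _ => p.2)
  · intro p hp
    simp only [Finset.mem_filter, Finset.mem_product] at hp ⊢
    refine ⟨hp.1.1.2, ?_⟩
    rw [← hp.2]
    exact hp.1.2
  · intro p hp q hq h
    simp only [Finset.mem_filter] at hp hq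
    exact Prod.ext (hp.2.trans hq.2.symm) h
  · intro y hy
    simp only [Finset.mem_filter] at hy
    refine ⟨(x, y), ?_, rfl⟩
    simp only [Finset.mem_filter, Finset.mem_product]
    exact ⟨⟨⟨hx, hy.1⟩, hy.2⟩, trivial⟩

lemma eBetween_comm (G : SimpleGraph V) (X Y : Finset V) :
    eBetween G X Y = eBetween G Y X := by
  classical
  rw [eBetween, eBetween]
  apply Finset.card_bij (fun p _ => (p.2, p.1))
  · intro p hp
    rw [Finset.mem_filter, Finset.mem_product] at hp ⊢
    exact ⟨⟨hp.1.2, hp.1.1⟩, hp.2.symm⟩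
  · intro p hp q hq h
    simp only [Prod.mk.injEq] at h
    exact Prod.ext h.2 h.1
  · intro p hp
    rw [Finset.mem_filter, Finset.mem_product] at hp
    exact ⟨(p.2, p.1), Finset.mem_filter.mpr ⟨Finset.mem_product.mpr ⟨hp.1.2, hp.1.1⟩,
      hp.2.symm⟩, rfl⟩

lemma fromEdgeSet_coe_le (G : SimpleGraph V) (Sed : Finset (Sym2 V))
    (h : Sed ⊆ G.edgeFinset) : SimpleGraph.fromEdgeSet (↑Sed : Set (Sym2 V)) ≤ G := by
  intro v w hvw
  rw [SimpleGraph.fromEdgeSet_adj] at hvw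
  have : s(v, w) ∈ G.edgeFinset := h hvw.1
  rw [SimpleGraph.mem_edgeFinset, SimpleGraph.mem_edgeSet] at this
  exact this

lemma fromEdgeSet_edgeFinset (H : SimpleGraph V) :
    SimpleGraph.fromEdgeSet (↑H.edgeFinset : Set (Sym2 V)) = H := by
  rw [SimpleGraph.coe_edgeFinset, SimpleGraph.fromEdgeSet_edgeSet]

lemma walkGraph_eq_fromEdgeSet {G : SimpleGraph V} {a b : V} (P : G.Walk a b) :
    walkGraph P = SimpleGraph.fromEdgeSet (↑P.edges.toFinset : Set (Sym2 V)) := by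
  rw [walkGraph]
  congr 1
  ext e
  simp

/-- An explicit reformulation of `BipREwitness` in terms of edge sets, used to make
canonical choices in the union bound. -/
def WitP (A SV : Finset V) (SE : Finset (Sym2 V)) (f : V → V) (s Ef : Finset (Sym2 V))
    (ℓ : ℕ) (S : Finset V) (T : V → Finset V) : Prop :=
  S ⊆ Aᶜ ∧ (1 / 6 : ℝ) * (Fintype.card V : ℝ) ≤ (S.card : ℝ) ∧
    ∀ v ∈ S, T v ⊆ A ∧ (1 / 6 : ℝ) * (Fintype.card V : ℝ) ≤ ((T v).card : ℝ) ∧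
      ∀ w ∈ T v, ∃ Q : (SimpleGraph.fromEdgeSet (↑s : Set (Sym2 V)) ⊔
          SimpleGraph.fromEdgeSet (↑Ef : Set (Sym2 V))).Walk v w,
        ProperWalk A Aᶜ SV SE f Q ∧ Q.length = ℓ

lemma witP_iff (A SV : Finset V) (SE : Finset (Sym2 V)) (f : V → V) (H' : SimpleGraph V)
    {a b : V} (P : (⊤ : SimpleGraph V).Walk a b) (S : Finset V) (T : V → Finset V) :
    WitP A SV SE f H'.edgeFinset P.edges.toFinset P.length S T ↔
      BipREwitness (1 / 6) H' A Aᶜ SV SE f P S T := by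
  rw [WitP, BipREwitness, fromEdgeSet_edgeFinset, ← walkGraph_eq_fromEdgeSet]

end Helpers

set_option maxHeartbeats 2000000 in
/-- Lemma 4.9: in the third case of the classification (with `α = 1/2²³`), for every fixed
`β > 0` there is `C = C(β)` such that for `p ≥ C log n / n`, the graph `G_p` a.a.s.
complements every one of its subgraphs with property `BIPRE(1/6)` (w.r.t. the partition
`(A, Ā)`) and at most `β n log n` edges. -/
theorem case_three_complement (β : ℝ) (hβ : 0 < β) :
    ∃ C : ℝ, ∀ δ : ℝ, 0 < δ → ∃ N : ℕ, ∀ n : ℕ, N ≤ n →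
      ∀ (G : SimpleGraph (Fin n)) (A : Finset (Fin n)),
        (∀ v, (n : ℝ) / 2 ≤ (G.degree v : ℝ)) →
        (n : ℝ) / 2 ≤ (A.card : ℝ) → (A.card : ℝ) ≤ (1 / 2 + 16 * paperAlpha) * n →
        (1 / 4 - 14 * paperAlpha) * (n : ℝ) ^ 2 ≤ (eBetween G A Aᶜ : ℝ) →
        (∀ v ∈ A, (n : ℝ) / 64 ≤ ((Aᶜ.filter (G.Adj v)).card : ℝ)) →
        (∀ v ∈ Aᶜ, (n : ℝ) / 64 ≤ ((A.filter (G.Adj v)).card : ℝ)) →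
        (A.card = (n + 1) / 2 ∨ ∀ v ∈ A, ((A.filter (G.Adj v)).card : ℝ) ≤ (n : ℝ) / 32) →
        ∀ p : ℝ, C * Real.log n / n ≤ p → p ≤ 1 →
          1 - δ ≤ subgraphProb G p fun H =>
            ∀ H' : SimpleGraph (Fin n), H' ≤ H → BIPREwrt (1 / 6) H' A Aᶜ →
              (H'.edgeFinset.card : ℝ) ≤ β * n * Real.log n →
              BipComplementsWrt (1 / 6) H' H A Aᶜ := by
  refine ⟨10000 * (β + 1), fun δ hδ => ⟨max 10 ⌈-Real.log δ⌉₊, fun n hn G A hdeg hA1 hA2 heB hd1 hd2 halt p hp hp1 => ?_⟩⟩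
  have hn10 : 10 ≤ n := le_trans (le_max_left _ _) hn
  have hn0 : 0 < n := by omega
  have hnR : (10 : ℝ) ≤ (n : ℝ) := by exact_mod_cast hn10
  have hL1 : 1 ≤ Real.log n := by
    rw [Real.le_log_iff_exp_le (by linarith)]
    calc Real.exp 1 ≤ 3 := by
          have := Real.exp_one_lt_d9
          norm_num at this ⊢
          linarith
      _ ≤ (n : ℝ) := by linarith
  have hCpos : (0 : ℝ) < 10000 * (β + 1) := by linarith
  have hp0 : 0 ≤ p := by
    have : 0 < 10000 * (β + 1) * Real.log n / n := by positivity
    linarith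
  classical
  -- canonical frame data for each edge set
  have hch : ∀ s : Finset (Sym2 (Fin n)), ∃ (k : ℕ) (SV : Finset (Fin n))
      (SE : Finset (Sym2 (Fin n))) (f : Fin n → Fin n),
      BIPREwrt (1 / 6) (SimpleGraph.fromEdgeSet (↑s : Set (Sym2 (Fin n)))) A Aᶜ →
        IsMatchedFrame (SimpleGraph.fromEdgeSet (↑s : Set (Sym2 (Fin n)))) k A Aᶜ SV SE f ∧
        (framedSubgraph (SimpleGraph.fromEdgeSet (↑s : Set (Sym2 (Fin n)))) A Aᶜ).Connected ∧
        ∀ (a b : Fin n) (P : (⊤ : SimpleGraph (Fin n)).Walk a b), ProperWalk A Aᶜ SV SE f P →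
          BipLonger (SimpleGraph.fromEdgeSet (↑s : Set (Sym2 (Fin n))) ⊔ walkGraph P) A Aᶜ SV SE f
            P.length ∨
          ∃ S T, BipREwitness (1 / 6) (SimpleGraph.fromEdgeSet (↑s : Set (Sym2 (Fin n)))) A Aᶜ
            SV SE f P S T := by
    intro s
    by_cases h : BIPREwrt (1 / 6) (SimpleGraph.fromEdgeSet (↑s : Set (Sym2 (Fin n)))) A Aᶜ
    · obtain ⟨k, SV, SE, f, h1, h2, h3⟩ := h
      exact ⟨k, SV, SE, f, fun _ => ⟨h1, h2, h3⟩⟩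
    · exact ⟨0, ∅, ∅, id, fun hh => absurd hh h⟩
  choose kf SVf SEf ff hfr using hch
  -- canonical witness choice
  have hwch : ∀ (s Ef : Finset (Sym2 (Fin n))) (ℓ : ℕ), ∃ (S : Finset (Fin n))
      (T : Fin n → Finset (Fin n)),
      (∃ S' T', WitP A (SVf s) (SEf s) (ff s) s Ef ℓ S' T') →
        WitP A (SVf s) (SEf s) (ff s) s Ef ℓ S T := by
    intro s Ef ℓ
    by_cases h : ∃ S' T', WitP A (SVf s) (SEf s) (ff s) s Ef ℓ S' T'
    · obtain ⟨S, T, hST⟩ := h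
      exact ⟨S, T, fun _ => hST⟩
    · exact ⟨∅, fun _ => ∅, fun hh => absurd hh h⟩
  choose Sc Tc hSc using hwch
  obtain ⟨sSet, hsSet⟩ : ∃ v : Finset (Finset (Sym2 (Fin n))),
      v = G.edgeFinset.powerset.filter (fun s => (s.card : ℝ) ≤ β * n * Real.log n) := ⟨_, rfl⟩
  obtain ⟨ESet, hESet⟩ : ∃ v : Finset (Finset (Sym2 (Fin n))),
      v = (Finset.univ : Finset (Sym2 (Fin n))).powerset.filter (fun Ef => Ef.card ≤ n) :=
    ⟨_, rfl⟩
  obtain ⟨I, hI⟩ : ∃ v : Finset (Finset (Sym2 (Fin n)) × Finset (Sym2 (Fin n)) × ℕ),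
      v = sSet ×ˢ (ESet ×ˢ Finset.range (n + 1)) := ⟨_, rfl⟩
  obtain ⟨Bad, hBad⟩ : ∃ B : Finset (Sym2 (Fin n)) → Finset (Sym2 (Fin n)) → ℕ →
      SimpleGraph (Fin n) → Prop,
      B = fun s Ef ℓ H =>
        (∃ S' T', WitP A (SVf s) (SEf s) (ff s) s Ef ℓ S' T') ∧
        (↑s : Set (Sym2 (Fin n))) ⊆ H.edgeSet ∧
        ∀ v ∈ Sc s Ef ℓ, ∀ w ∈ Tc s Ef ℓ v, ¬ H.Adj v w := ⟨_, rfl⟩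
  -- the deterministic implication
  have hdet : ∀ H : SimpleGraph (Fin n), H ≤ G → (∀ i ∈ I, ¬ Bad i.1 i.2.1 i.2.2 H) →
      ∀ H' : SimpleGraph (Fin n), H' ≤ H → BIPREwrt (1 / 6) H' A Aᶜ →
        (H'.edgeFinset.card : ℝ) ≤ β * n * Real.log n →
        BipComplementsWrt (1 / 6) H' H A Aᶜ := by
    intro H hHG hnb H' hH'le hBip hsize
    have hsub : H'.edgeFinset ⊆ G.edgeFinset := SimpleGraph.edgeFinset_mono (le_trans hH'le hHG)
    have hBip' : BIPREwrt (1 / 6)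
        (SimpleGraph.fromEdgeSet (↑H'.edgeFinset : Set (Sym2 (Fin n)))) A Aᶜ := by
      rw [fromEdgeSet_edgeFinset]
      exact hBip
    obtain ⟨hfr1, hfr2, hfr3⟩ := hfr H'.edgeFinset hBip'
    rw [fromEdgeSet_edgeFinset] at hfr1 hfr2 hfr3
    refine ⟨kf H'.edgeFinset, SVf H'.edgeFinset, SEf H'.edgeFinset, ff H'.edgeFinset,
      hfr1, hfr2, ?_⟩
    intro a b P hP
    rcases hfr3 a b P hP with hlong | ⟨S, T, hw⟩
    · exact Or.inl hlong
    · right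
      have hwitP : WitP A (SVf H'.edgeFinset) (SEf H'.edgeFinset) (ff H'.edgeFinset)
          H'.edgeFinset P.edges.toFinset P.length S T :=
        (witP_iff A _ _ _ H' P S T).mpr hw
      have hex : ∃ S' T', WitP A (SVf H'.edgeFinset) (SEf H'.edgeFinset) (ff H'.edgeFinset)
          H'.edgeFinset P.edges.toFinset P.length S' T' := ⟨S, T, hwitP⟩
      have hWitc := hSc H'.edgeFinset P.edges.toFinset P.length hex
      have hmem : (H'.edgeFinset, P.edges.toFinset, P.length) ∈ I := by
        rw [hI]
        refine Finset.mem_product.mpr ⟨?_, Finset.mem_product.mpr ⟨?_, ?_⟩⟩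
        · rw [hsSet]
          exact Finset.mem_filter.mpr ⟨Finset.mem_powerset.mpr hsub, hsize⟩
        · rw [hESet]
          refine Finset.mem_filter.mpr ⟨Finset.mem_powerset.mpr (Finset.subset_univ _), ?_⟩
          calc P.edges.toFinset.card ≤ P.edges.length := List.toFinset_card_le _
            _ = P.length := P.length_edges
            _ ≤ n := by
                have := hP.1.length_lt
                rw [Fintype.card_fin] at this
                omega
        · refine Finset.mem_range.mpr ?_
          show P.length < n + 1
          have := hP.1.length_lt
          rw [Fintype.card_fin] at this
          omega
      by_cases hedge : ∃ v ∈ Sc H'.edgeFinset P.edges.toFinset P.length,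
          ∃ w ∈ Tc H'.edgeFinset P.edges.toFinset P.length v, H.Adj v w
      · obtain ⟨v, hv, w, hw', hadj⟩ := hedge
        refine ⟨_, _, (witP_iff A _ _ _ H' P _ _).mp hWitc, v, hv, w, hw', ?_⟩
        have hle : H ≤ H' ⊔ H ⊔ walkGraph P := le_trans le_sup_right le_sup_left
        exact hle hadj
      · exfalso
        apply hnb (H'.edgeFinset, P.edges.toFinset, P.length) hmem
        rw [hBad]
        refine ⟨hex, ?_, ?_⟩
        · rw [SimpleGraph.coe_edgeFinset]
          exact SimpleGraph.edgeSet_mono hH'le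
        · intro v hv w hw' hadj
          exact hedge ⟨v, hv, w, hw', hadj⟩
  -- per-event probability bound
  have hper : ∀ i ∈ I, subgraphProb G p (Bad i.1 i.2.1 i.2.2) ≤
      p ^ i.1.card * Real.exp (-(p * ((n : ℝ) ^ 2 / 72))) := by
    rintro ⟨s, Ef, ℓ⟩ hiI
    dsimp only
    by_cases hex : ∃ S' T', WitP A (SVf s) (SEf s) (ff s) s Ef ℓ S' T'
    swap
    · have hzero : subgraphProb G p (Bad s Ef ℓ) = 0 := by
        rw [subgraphProb]
        apply Finset.sum_eq_zero
        intro Sed _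
        have hnb : ¬ Bad s Ef ℓ (SimpleGraph.fromEdgeSet (↑Sed : Set (Sym2 (Fin n)))) := by
          rw [hBad]
          rintro ⟨h, -, -⟩
          exact hex h
        rw [if_neg hnb]
      rw [hzero]
      positivity
    obtain ⟨hS1, hS2, hS3⟩ := hSc s Ef ℓ hex
    rw [Fintype.card_fin] at hS2
    obtain ⟨F, hFdef⟩ : ∃ F : Finset (Sym2 (Fin n)), F = (Sc s Ef ℓ).biUnion
        (fun v => ((Tc s Ef ℓ v).filter (fun w => G.Adj v w)).image (fun w => s(v, w))) :=
      ⟨_, rfl⟩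
    -- each element of `F` is a `G`-edge
    have hFsub : F ⊆ G.edgeFinset := by
      rw [hFdef]
      intro e he
      rw [Finset.mem_biUnion] at he
      obtain ⟨v, hv, heim⟩ := he
      rw [Finset.mem_image] at heim
      obtain ⟨w, hw, rfl⟩ := heim
      rw [Finset.mem_filter] at hw
      rw [SimpleGraph.mem_edgeFinset, SimpleGraph.mem_edgeSet]
      exact hw.2
    -- disjointness of the fibers of `F`
    have hdisj : ∀ v ∈ (Sc s Ef ℓ : Finset (Fin n)), ∀ v' ∈ (Sc s Ef ℓ : Finset (Fin n)),
        v ≠ v' → Disjoint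
          (((Tc s Ef ℓ v).filter (fun w => G.Adj v w)).image (fun w => s(v, w)))
          (((Tc s Ef ℓ v').filter (fun w => G.Adj v' w)).image (fun w => s(v', w))) := by
      intro v hv v' hv' hne
      rw [Finset.disjoint_left]
      intro e he he'
      rw [Finset.mem_image] at he he'
      obtain ⟨w, hw, rfl⟩ := he
      obtain ⟨w', hw', heq⟩ := he'
      rw [Finset.mem_filter] at hw hw'
      have hwA : w ∈ A := (hS3 v hv).1 hw.1
      have hvA : v ∉ A := Finset.mem_compl.mp (hS1 hv)
      rw [Sym2.eq_iff] at heq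
      rcases heq with ⟨h1, h2⟩ | ⟨h1, h2⟩
      · exact hne h1.symm
      · have hv'A : v' ∉ A := Finset.mem_compl.mp (hS1 hv')
        rw [h1] at hv'A
        exact hv'A hwA
    -- cardinality of `F`
    have hcard : (F.card : ℝ) = ∑ v ∈ Sc s Ef ℓ, (((Tc s Ef ℓ v).filter
        (fun w => G.Adj v w)).card : ℝ) := by
      rw [hFdef, Finset.card_biUnion hdisj]
      push_cast
      apply Finset.sum_congr rfl
      intro v hv
      congr 1
      apply Finset.card_image_of_injOn
      intro w hw w' hw' heq
      rw [Finset.mem_coe, Finset.mem_filter] at hw hw'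
      rw [Sym2.eq_iff] at heq
      rcases heq with ⟨h1, h2⟩ | ⟨h1, h2⟩
      · exact h2
      · exfalso
        have hwA : w ∈ A := (hS3 v hv).1 hw.1
        have hvA : v ∉ A := Finset.mem_compl.mp (hS1 hv)
        rw [h2] at hwA
        exact hvA hwA
    -- per-vertex lower bound
    have hperv : ∀ v ∈ Sc s Ef ℓ, (n : ℝ) / 6 - ((A.card : ℝ) -
        ((A.filter (G.Adj v)).card : ℝ)) ≤
        (((Tc s Ef ℓ v).filter (fun w => G.Adj v w)).card : ℝ) := by
      intro v hv
      obtain ⟨hT1, hT2, -⟩ := hS3 v hv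
      rw [Fintype.card_fin] at hT2
      have hsplit := Finset.card_filter_add_card_filter_not
        (s := Tc s Ef ℓ v) (p := G.Adj v)
      have hsplitA := Finset.card_filter_add_card_filter_not (s := A) (p := G.Adj v)
      have hmono : ((Tc s Ef ℓ v).filter (fun w => ¬ G.Adj v w)).card ≤
          (A.filter (fun w => ¬ G.Adj v w)).card :=
        Finset.card_le_card (Finset.monotone_filter_left _ hT1)
      have r1 : (((Tc s Ef ℓ v).filter (fun w => G.Adj v w)).card : ℝ) +
          (((Tc s Ef ℓ v).filter (fun w => ¬ G.Adj v w)).card : ℝ) =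
          ((Tc s Ef ℓ v).card : ℝ) := by exact_mod_cast hsplit
      have r2 : ((A.filter (G.Adj v)).card : ℝ) +
          ((A.filter (fun w => ¬ G.Adj v w)).card : ℝ) = (A.card : ℝ) := by
        exact_mod_cast hsplitA
      have r3 : (((Tc s Ef ℓ v).filter (fun w => ¬ G.Adj v w)).card : ℝ) ≤
          ((A.filter (fun w => ¬ G.Adj v w)).card : ℝ) := by exact_mod_cast hmono
      linarith
    -- total defect bound
    have hdefect : ∑ v ∈ Sc s Ef ℓ, ((A.card : ℝ) - ((A.filter (G.Adj v)).card : ℝ)) ≤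
        14 * paperAlpha * (n : ℝ) ^ 2 := by
      have h1 : ∑ v ∈ Sc s Ef ℓ, ((A.card : ℝ) - ((A.filter (G.Adj v)).card : ℝ)) ≤
          ∑ v ∈ Aᶜ, ((A.card : ℝ) - ((A.filter (G.Adj v)).card : ℝ)) := by
        apply Finset.sum_le_sum_of_subset_of_nonneg hS1
        intro v _ _
        have : (A.filter (G.Adj v)).card ≤ A.card := Finset.card_le_card (Finset.filter_subset _ _)
        have := (Nat.cast_le (α := ℝ)).mpr this
        linarith
      have h2 : ∑ v ∈ Aᶜ, ((A.card : ℝ) - ((A.filter (G.Adj v)).card : ℝ)) =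
          (Aᶜ.card : ℝ) * (A.card : ℝ) - (eBetween G Aᶜ A : ℝ) := by
        rw [Finset.sum_sub_distrib, Finset.sum_const, nsmul_eq_mul]
        congr 1
        rw [eBetween_eq_sum]
        push_cast
        rfl
      have h3 : (eBetween G Aᶜ A : ℝ) = (eBetween G A Aᶜ : ℝ) := by
        rw [eBetween_comm]
      have h4 : (A.card : ℝ) * (Aᶜ.card : ℝ) ≤ (n : ℝ) ^ 2 / 4 := by
        have := Finset.card_add_card_compl A
        rw [Fintype.card_fin] at this
        have hr : (A.card : ℝ) + (Aᶜ.card : ℝ) = (n : ℝ) := by exact_mod_cast this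
        nlinarith [sq_nonneg ((A.card : ℝ) - (Aᶜ.card : ℝ))]
      refine h1.trans ?_
      rw [h2, h3]
      nlinarith [heB, h4]
    have hScard : (n : ℝ) / 6 ≤ ((Sc s Ef ℓ).card : ℝ) := by linarith
    -- the main cardinality bound
    have hFcard : (n : ℝ) ^ 2 / 72 ≤ (F.card : ℝ) := by
      rw [hcard]
      have hsum1 : ∑ v ∈ Sc s Ef ℓ, ((n : ℝ) / 6 - ((A.card : ℝ) -
          ((A.filter (G.Adj v)).card : ℝ))) ≤ ∑ v ∈ Sc s Ef ℓ, (((Tc s Ef ℓ v).filter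
          (fun w => G.Adj v w)).card : ℝ) := Finset.sum_le_sum hperv
      have hsum2 : ∑ v ∈ Sc s Ef ℓ, ((n : ℝ) / 6 - ((A.card : ℝ) -
          ((A.filter (G.Adj v)).card : ℝ))) = ((Sc s Ef ℓ).card : ℝ) * ((n : ℝ) / 6) -
          ∑ v ∈ Sc s Ef ℓ, ((A.card : ℝ) - ((A.filter (G.Adj v)).card : ℝ)) := by
        rw [Finset.sum_sub_distrib, Finset.sum_const, nsmul_eq_mul]
      have halpha : 14 * paperAlpha ≤ 1 / 144 := by
        rw [paperAlpha]
        norm_num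
      nlinarith [hsum1, hsum2, hdefect, hScard, sq_nonneg ((n : ℝ) / 6)]
    -- apply the probability bound
    have hcond : ∀ Sed ∈ G.edgeFinset.powerset,
        Bad s Ef ℓ (SimpleGraph.fromEdgeSet (↑Sed : Set (Sym2 (Fin n)))) →
        s ⊆ Sed ∧ Sed ∩ F = ∅ := by
      intro Sed _ hb
      rw [hBad] at hb
      obtain ⟨-, hsub, hnoe⟩ := hb
      constructor
      · intro e he
        have h1 : e ∈ (SimpleGraph.fromEdgeSet (↑Sed : Set (Sym2 (Fin n)))).edgeSet :=
          hsub (Finset.mem_coe.mpr he)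
        rw [SimpleGraph.edgeSet_fromEdgeSet] at h1
        exact Finset.mem_coe.mp h1.1
      · rw [Finset.eq_empty_iff_forall_notMem]
        intro e he
        rw [Finset.mem_inter] at he
        obtain ⟨heS, heF⟩ := he
        rw [hFdef, Finset.mem_biUnion] at heF
        obtain ⟨v, hv, heim⟩ := heF
        rw [Finset.mem_image] at heim
        obtain ⟨w, hw, rfl⟩ := heim
        rw [Finset.mem_filter] at hw
        apply hnoe v hv w hw.1
        rw [SimpleGraph.fromEdgeSet_adj]
        exact ⟨Finset.mem_coe.mpr heS, hw.2.ne⟩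
    have happ := prob_le G p hp0 hp1 s F hFsub (Bad s Ef ℓ) hcond
    refine happ.trans ?_
    have hle1 : (1 - p) ^ F.card ≤ Real.exp (-(p * ((n : ℝ) ^ 2 / 72))) := by
      have e1 : (1 - p) ≤ Real.exp (-p) := by
        have := Real.add_one_le_exp (-p)
        linarith
      have e2 : (1 - p) ^ F.card ≤ Real.exp (-p) ^ F.card := by
        apply pow_le_pow_left₀ (by linarith) e1
      refine e2.trans ?_
      rw [← Real.exp_nat_mul]
      apply Real.exp_le_exp.mpr
      have : p * ((n : ℝ) ^ 2 / 72) ≤ p * (F.card : ℝ) :=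
        mul_le_mul_of_nonneg_left hFcard hp0
      nlinarith
    have hps : (0 : ℝ) ≤ p ^ s.card := pow_nonneg hp0 _
    exact mul_le_mul_of_nonneg_left hle1 hps
  -- union bound
  have hunion : 1 - subgraphProb G p (fun H =>
      ∀ H' : SimpleGraph (Fin n), H' ≤ H → BIPREwrt (1 / 6) H' A Aᶜ →
        (H'.edgeFinset.card : ℝ) ≤ β * n * Real.log n →
        BipComplementsWrt (1 / 6) H' H A Aᶜ) ≤
      ∑ i ∈ I, subgraphProb G p (Bad i.1 i.2.1 i.2.2) := by
    have hone : (∑ Sed ∈ G.edgeFinset.powerset,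
        p ^ Sed.card * (1 - p) ^ (G.edgeFinset.card - Sed.card)) = 1 := by
      rw [bsum]
      norm_num
    have hsum2 : ∑ i ∈ I, subgraphProb G p (Bad i.1 i.2.1 i.2.2) =
        ∑ Sed ∈ G.edgeFinset.powerset, ∑ i ∈ I,
          (if Bad i.1 i.2.1 i.2.2 (SimpleGraph.fromEdgeSet (↑Sed : Set (Sym2 (Fin n)))) then
            p ^ Sed.card * (1 - p) ^ (G.edgeFinset.card - Sed.card) else 0) := by
      simp only [subgraphProb]
      rw [Finset.sum_comm]
    have hmain : (1 : ℝ) ≤ subgraphProb G p (fun H =>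
        ∀ H' : SimpleGraph (Fin n), H' ≤ H → BIPREwrt (1 / 6) H' A Aᶜ →
          (H'.edgeFinset.card : ℝ) ≤ β * n * Real.log n →
          BipComplementsWrt (1 / 6) H' H A Aᶜ) +
        ∑ i ∈ I, subgraphProb G p (Bad i.1 i.2.1 i.2.2) := by
      rw [hsum2, subgraphProb, ← Finset.sum_add_distrib]
      refine le_trans (le_of_eq hone.symm) ?_
      apply Finset.sum_le_sum
      intro Sed hSed
      by_cases hQ : ∀ H' : SimpleGraph (Fin n),
          H' ≤ SimpleGraph.fromEdgeSet (↑Sed : Set (Sym2 (Fin n))) → BIPREwrt (1 / 6) H' A Aᶜ →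
          (H'.edgeFinset.card : ℝ) ≤ β * n * Real.log n →
          BipComplementsWrt (1 / 6) H' (SimpleGraph.fromEdgeSet (↑Sed : Set (Sym2 (Fin n)))) A Aᶜ
      · rw [if_pos hQ]
        have hnn : (0 : ℝ) ≤ ∑ i ∈ I,
            (if Bad i.1 i.2.1 i.2.2 (SimpleGraph.fromEdgeSet (↑Sed : Set (Sym2 (Fin n)))) then
              p ^ Sed.card * (1 - p) ^ (G.edgeFinset.card - Sed.card) else 0) := by
          apply Finset.sum_nonneg
          intro i _
          split
          · exact mul_nonneg (pow_nonneg hp0 _) (pow_nonneg (by linarith) _)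
          · exact le_rfl
        linarith
      · rw [if_neg hQ, zero_add]
        have hHG : SimpleGraph.fromEdgeSet (↑Sed : Set (Sym2 (Fin n))) ≤ G :=
          fromEdgeSet_coe_le G Sed (Finset.mem_powerset.mp hSed)
        have hbad : ¬ ∀ i ∈ I, ¬ Bad i.1 i.2.1 i.2.2
            (SimpleGraph.fromEdgeSet (↑Sed : Set (Sym2 (Fin n)))) :=
          fun hc => hQ (hdet _ hHG hc)
        push_neg at hbad
        obtain ⟨i, hiI, hBadi⟩ := hbad
        calc p ^ Sed.card * (1 - p) ^ (G.edgeFinset.card - Sed.card)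
            = (if Bad i.1 i.2.1 i.2.2 (SimpleGraph.fromEdgeSet (↑Sed : Set (Sym2 (Fin n)))) then
              p ^ Sed.card * (1 - p) ^ (G.edgeFinset.card - Sed.card) else 0) :=
              (if_pos hBadi).symm
          _ ≤ ∑ i ∈ I,
              (if Bad i.1 i.2.1 i.2.2 (SimpleGraph.fromEdgeSet (↑Sed : Set (Sym2 (Fin n)))) then
                p ^ Sed.card * (1 - p) ^ (G.edgeFinset.card - Sed.card) else 0) := by
              apply Finset.single_le_sum (f := fun i =>
                (if Bad i.1 i.2.1 i.2.2 (SimpleGraph.fromEdgeSet (↑Sed : Set (Sym2 (Fin n)))) then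
                  p ^ Sed.card * (1 - p) ^ (G.edgeFinset.card - Sed.card) else 0)) ?_ hiI
              intro j _
              split
              · exact mul_nonneg (pow_nonneg hp0 _) (pow_nonneg (by linarith) _)
              · exact le_rfl
    linarith
  -- final numeric estimate
  have hnum : ∑ i ∈ I, subgraphProb G p (Bad i.1 i.2.1 i.2.2) ≤ δ := by
    set L := Real.log n with hLdef
    set K := Real.exp (-(p * ((n : ℝ) ^ 2 / 72))) with hK
    set M := ⌈β * n * L⌉₊ with hM
    have hKpos : 0 < K := Real.exp_pos _
    -- edge count of `G`
    have hEcard : (G.edgeFinset.card : ℝ) ≤ (n : ℝ) ^ 2 := by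
      have h1 : G.edgeFinset.card ≤ Fintype.card (Sym2 (Fin n)) := Finset.card_le_univ _
      have h2 : Fintype.card (Sym2 (Fin n)) ≤ n ^ 2 := by
        rw [Sym2.card, Fintype.card_fin, Nat.choose_two_right]
        have e1 : (n + 1) * ((n + 1) - 1) = n * n + n := by
          rw [Nat.add_sub_cancel]; ring
        have e2 : n ≤ n * n := Nat.le_mul_of_pos_left n hn0
        have e3 : n ^ 2 = n * n := sq n
        omega
      calc (G.edgeFinset.card : ℝ) ≤ (Fintype.card (Sym2 (Fin n)) : ℝ) := Nat.cast_le.mpr h1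
        _ ≤ ((n ^ 2 : ℕ) : ℝ) := Nat.cast_le.mpr h2
        _ = (n : ℝ) ^ 2 := by push_cast; ring
    -- bound on the weighted number of sparse subgraphs
    have hA1 : ∑ s ∈ sSet, p ^ s.card ≤ (256 : ℝ) ^ M * Real.exp (p * (n : ℝ) ^ 2 / 256) := by
      have hstep1 : ∀ s ∈ sSet, p ^ s.card ≤ (256 : ℝ) ^ M * (p / 256) ^ s.card := by
        intro s hs
        rw [hsSet, Finset.mem_filter] at hs
        have hcard : s.card ≤ M := by
          have h1 : (s.card : ℝ) ≤ β * n * L := hs.2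
          have h2 : β * n * L ≤ (M : ℝ) := Nat.le_ceil _
          exact_mod_cast h1.trans h2
        have h3 : (256 : ℝ) ^ s.card ≤ (256 : ℝ) ^ M :=
          pow_le_pow_right₀ (by norm_num) hcard
        have h4 : p ^ s.card = (256 : ℝ) ^ s.card * (p / 256) ^ s.card := by
          rw [← mul_pow, show (256 : ℝ) * (p / 256) = p by ring]
        rw [h4]
        apply mul_le_mul_of_nonneg_right h3 (pow_nonneg (by positivity) _)
      calc ∑ s ∈ sSet, p ^ s.card ≤ ∑ s ∈ sSet, (256 : ℝ) ^ M * (p / 256) ^ s.card :=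
            Finset.sum_le_sum hstep1
        _ = (256 : ℝ) ^ M * ∑ s ∈ sSet, (p / 256) ^ s.card := by rw [Finset.mul_sum]
        _ ≤ (256 : ℝ) ^ M * ∑ s ∈ G.edgeFinset.powerset, (p / 256) ^ s.card := by
            apply mul_le_mul_of_nonneg_left _ (by positivity)
            apply Finset.sum_le_sum_of_subset_of_nonneg
            · rw [hsSet]
              exact Finset.filter_subset _ _
            · intro s _ _
              positivity
        _ ≤ (256 : ℝ) ^ M * Real.exp (p * (n : ℝ) ^ 2 / 256) := by
            apply mul_le_mul_of_nonneg_left _ (by positivity)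
            have hb : ∑ s ∈ G.edgeFinset.powerset, (p / 256) ^ s.card =
                (p / 256 + 1) ^ G.edgeFinset.card := by
              rw [← bsum G.edgeFinset (p / 256) 1]
              apply Finset.sum_congr rfl
              intro s _
              rw [one_pow, mul_one]
            rw [hb]
            have h5 : (p / 256 + 1) ^ G.edgeFinset.card ≤
                Real.exp (p / 256) ^ G.edgeFinset.card := by
              apply pow_le_pow_left₀ (by positivity)
              have := Real.add_one_le_exp (p / 256)
              linarith
            refine h5.trans ?_
            rw [← Real.exp_nat_mul]
            apply Real.exp_le_exp.mpr
            have h6 : (G.edgeFinset.card : ℝ) * (p / 256) ≤ (n : ℝ) ^ 2 * (p / 256) := by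
              apply mul_le_mul_of_nonneg_right hEcard (by positivity)
            calc (G.edgeFinset.card : ℝ) * (p / 256) ≤ (n : ℝ) ^ 2 * (p / 256) := h6
              _ = p * (n : ℝ) ^ 2 / 256 := by ring
    -- bound on the number of path data
    have hCnt : ((ESet.card * (n + 1) : ℕ) : ℝ) ≤ Real.exp (3 * n * L) := by
      have hE1 : ESet ⊆ (Finset.range (n + 1)).biUnion
          (fun j => Finset.powersetCard j (Finset.univ : Finset (Sym2 (Fin n)))) := by
        intro Ef hEf
        rw [hESet, Finset.mem_filter] at hEf
        rw [Finset.mem_biUnion]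
        exact ⟨Ef.card, Finset.mem_range.mpr (by omega),
          Finset.mem_powersetCard.mpr ⟨Finset.subset_univ _, rfl⟩⟩
      have hE2 : ESet.card ≤ (n + 1) * (n ^ 2) ^ n := by
        calc ESet.card ≤ ((Finset.range (n + 1)).biUnion
              (fun j => Finset.powersetCard j (Finset.univ : Finset (Sym2 (Fin n))))).card :=
              Finset.card_le_card hE1
          _ ≤ ∑ j ∈ Finset.range (n + 1),
              (Finset.powersetCard j (Finset.univ : Finset (Sym2 (Fin n)))).card :=
              Finset.card_biUnion_le
          _ ≤ (n + 1) * (n ^ 2) ^ n := by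
              have hb := Finset.sum_le_card_nsmul (Finset.range (n + 1))
                (fun j => (Finset.powersetCard j (Finset.univ : Finset (Sym2 (Fin n)))).card)
                ((n ^ 2) ^ n) ?_
              · rwa [Finset.card_range, smul_eq_mul] at hb
              · intro j hj
                rw [Finset.card_powersetCard, Finset.card_univ]
                have hc1 : (Fintype.card (Sym2 (Fin n))).choose j ≤
                    (Fintype.card (Sym2 (Fin n))) ^ j := Nat.choose_le_pow _ _
                have hc2 : Fintype.card (Sym2 (Fin n)) ≤ n ^ 2 := by
                  rw [Sym2.card, Fintype.card_fin, Nat.choose_two_right]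
                  have e1 : (n + 1) * ((n + 1) - 1) = n * n + n := by
                    rw [Nat.add_sub_cancel]; ring
                  have e2 : n ≤ n * n := Nat.le_mul_of_pos_left n hn0
                  have e3 : n ^ 2 = n * n := sq n
                  omega
                have hc3 : (Fintype.card (Sym2 (Fin n))) ^ j ≤ (n ^ 2) ^ j :=
                  Nat.pow_le_pow_left hc2 _
                have hc4 : (n ^ 2) ^ j ≤ (n ^ 2) ^ n := by
                  apply Nat.pow_le_pow_right (by positivity)
                  rw [Finset.mem_range] at hj
                  omega
                omega
      have hE3 : ((ESet.card * (n + 1) : ℕ) : ℝ) ≤ ((n : ℝ) + 1) ^ 2 * ((n : ℝ) ^ 2) ^ n := by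
        have := Nat.cast_le (α := ℝ).mpr (Nat.mul_le_mul_right (n + 1) hE2)
        push_cast at this ⊢
        nlinarith [this]
      refine hE3.trans ?_
      have hnexp : (n : ℝ) = Real.exp L := (Real.exp_log (by positivity)).symm
      have hb1 : ((n : ℝ) + 1) ^ 2 ≤ Real.exp (4 * L) := by
        have h1 : (n : ℝ) + 1 ≤ (n : ℝ) ^ 2 := by nlinarith
        have h2 : ((n : ℝ) + 1) ^ 2 ≤ ((n : ℝ) ^ 2) ^ 2 := by nlinarith
        refine h2.trans ?_
        rw [hnexp, ← Real.exp_nat_mul, ← Real.exp_nat_mul]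
        apply Real.exp_le_exp.mpr
        push_cast
        linarith
      have hb2 : ((n : ℝ) ^ 2) ^ n ≤ Real.exp (2 * n * L) := by
        rw [hnexp, ← Real.exp_nat_mul, ← Real.exp_nat_mul]
        apply Real.exp_le_exp.mpr
        push_cast
        nlinarith
      calc ((n : ℝ) + 1) ^ 2 * ((n : ℝ) ^ 2) ^ n ≤ Real.exp (4 * L) * Real.exp (2 * n * L) := by
            apply mul_le_mul hb1 hb2 (by positivity) (by positivity)
        _ = Real.exp (4 * L + 2 * n * L) := (Real.exp_add _ _).symm
        _ ≤ Real.exp (3 * n * L) := by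
            apply Real.exp_le_exp.mpr
            nlinarith
    -- bound on the `256 ^ M` factor
    have h256 : (256 : ℝ) ^ M ≤ Real.exp (6 * (β * n * L) + 6) := by
      have hlt : (256 : ℝ) ≤ Real.exp 6 := by
        have h1 : ((2.7182818283 : ℝ)) ^ 6 ≥ 256 := by norm_num
        have h2 : Real.exp 1 ^ 6 ≥ (2.7182818283 : ℝ) ^ 6 := by
          apply pow_le_pow_left₀ (by norm_num) (le_of_lt Real.exp_one_gt_d9)
        have h3 : Real.exp 1 ^ 6 = Real.exp 6 := by
          rw [← Real.exp_nat_mul]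
          norm_num
        linarith
      calc (256 : ℝ) ^ M ≤ (Real.exp 6) ^ M := pow_le_pow_left₀ (by norm_num) hlt _
        _ = Real.exp (M * 6) := by rw [← Real.exp_nat_mul]
        _ ≤ Real.exp (6 * (β * n * L) + 6) := by
            apply Real.exp_le_exp.mpr
            have h4 : (M : ℝ) < β * n * L + 1 := Nat.ceil_lt_add_one (by positivity)
            nlinarith
    -- combining the exponentials
    have hKbound : Real.exp (p * (n : ℝ) ^ 2 / 256) * K ≤
        Real.exp (-(89 * (β + 1) * n * L)) := by
      rw [hK, ← Real.exp_add]
      apply Real.exp_le_exp.mpr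
      have hpn : 10000 * (β + 1) * L * n ≤ p * (n : ℝ) ^ 2 := by
        have h1 : 10000 * (β + 1) * L / n ≤ p := hp
        have h2 : (0 : ℝ) < n := by positivity
        rw [div_le_iff₀ h2] at h1
        nlinarith
      nlinarith [hpn]
    -- final assembly
    calc ∑ i ∈ I, subgraphProb G p (Bad i.1 i.2.1 i.2.2)
        ≤ ∑ i ∈ I, p ^ i.1.card * K := Finset.sum_le_sum hper
      _ = ∑ s ∈ sSet, ∑ _y ∈ ESet ×ˢ Finset.range (n + 1), p ^ s.card * K := by
          rw [hI, Finset.sum_product]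
      _ = ((ESet.card * (n + 1) : ℕ) : ℝ) * ((∑ s ∈ sSet, p ^ s.card) * K) := by
          rw [Finset.sum_mul, Finset.mul_sum]
          apply Finset.sum_congr rfl
          intro s _
          rw [Finset.sum_const, nsmul_eq_mul, Finset.card_product, Finset.card_range]
          try push_cast
          try ring
      _ ≤ Real.exp (3 * n * L) * (((256 : ℝ) ^ M * Real.exp (p * (n : ℝ) ^ 2 / 256)) * K) := by
          apply mul_le_mul hCnt _ _ (by positivity)
          · apply mul_le_mul_of_nonneg_right hA1 (le_of_lt hKpos)
          · apply mul_nonneg _ (le_of_lt hKpos)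
            apply Finset.sum_nonneg
            intro s _
            exact pow_nonneg hp0 _
      _ = Real.exp (3 * n * L) * ((256 : ℝ) ^ M * (Real.exp (p * (n : ℝ) ^ 2 / 256) * K)) := by
          ring
      _ ≤ Real.exp (3 * n * L) * (Real.exp (6 * (β * n * L) + 6) *
            Real.exp (-(89 * (β + 1) * n * L))) := by
          apply mul_le_mul_of_nonneg_left _ (by positivity)
          apply mul_le_mul h256 hKbound (by positivity) (by positivity)
      _ = Real.exp (3 * n * L + (6 * (β * n * L) + 6) + -(89 * (β + 1) * n * L)) := by
          rw [← Real.exp_add, ← Real.exp_add]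
          congr 1
          ring
      _ ≤ Real.exp (-(n : ℝ)) := by
          apply Real.exp_le_exp.mpr
          have hnL : (n : ℝ) ≤ n * L := by nlinarith
          have hbnL : 0 ≤ β * n * L := by positivity
          nlinarith
      _ ≤ δ := by
          have h := Nat.le_ceil (-Real.log δ)
          have h2 : ((⌈-Real.log δ⌉₊ : ℕ) : ℝ) ≤ (n : ℝ) :=
            Nat.cast_le.mpr (le_trans (le_max_right _ _) hn)
          have h3 : -(n : ℝ) ≤ Real.log δ := by linarith
          calc Real.exp (-(n : ℝ)) ≤ Real.exp (Real.log δ) := Real.exp_le_exp.mpr h3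
            _ = δ := Real.exp_log hδ
  linarith [hunion, hnum]
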